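/- Let P ≻ 0 be an n×n positive definite matrix, C an m×n matrix, V ≻ 0 an m×m positive definite matrix, and K = P Cᵀ (C P Cᵀ + V)^{-1}. Then (I - K C) P is positive semidefinite. -/

import Mathlib

open Matrix

/-- Kalman update: with `P ≻ 0`, `V ≻ 0` and gain `K = P Cᵀ (C P Cᵀ + V)⁻¹`, the posterior
covariance `(I - K C) P` is positive semidefinite. -/
theorem stmt_3 {n m : ℕ} (P : Matrix (Fin n) (Fin n) ℝ) (C : Matrix (Fin m) (Fin n) ℝ)
    (V : Matrix (Fin m) (Fin m) ℝ) (hP : P.PosDef) (hV : V.PosDef)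
    (K : Matrix (Fin n) (Fin m) ℝ) (hK : K = P * Cᵀ * (C * P * Cᵀ + V)⁻¹) :
    ((1 - K * C) * P).PosSemidef := by
  have hCT : Cᵀ = Cᴴ := by ext i j; simp [conjTranspose_apply]
  have hS : (C * P * Cᵀ + V).PosDef := by
    rw [hCT]
    exact Matrix.PosDef.posSemidef_add (hP.posSemidef.mul_mul_conjTranspose_same C) hV
  have hPinv : Invertible P := hP.isUnit.invertible
  have hSinv : Invertible (C * P * Cᵀ + V) := hS.isUnit.invertible
  have hB : (P * Cᵀ)ᴴ = C * P := by
    rw [conjTranspose_mul, hP.1.eq, hCT, conjTranspose_conjTranspose]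
  -- the big block matrix is PSD, via Schur complement w.r.t. P (₁₁ block)
  have hblock : (fromBlocks P (P * Cᵀ) (P * Cᵀ)ᴴ (C * P * Cᵀ + V)).PosSemidef := by
    rw [Matrix.PosDef.fromBlocks₁₁ _ _ hP]
    have h1 : (C * P * Cᵀ + V) - (P * Cᵀ)ᴴ * P⁻¹ * (P * Cᵀ) = V := by
      rw [hB, Matrix.mul_assoc (C * P) P⁻¹ (P * Cᵀ), ← Matrix.mul_assoc P⁻¹ P Cᵀ,
        Matrix.inv_mul_of_invertible P, Matrix.one_mul]
      exact add_sub_cancel_left _ _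
    rw [h1]
    exact hV.posSemidef
  -- Schur complement w.r.t. the ₂₂ block
  have h2 := (Matrix.PosDef.fromBlocks₂₂ P (P * Cᵀ) hS).mp hblock
  have key : P - (P * Cᵀ) * (C * P * Cᵀ + V)⁻¹ * (P * Cᵀ)ᴴ = (1 - K * C) * P := by
    rw [hB, hK, Matrix.sub_mul, Matrix.one_mul]
    simp [Matrix.mul_assoc]
  rwa [key] at h2
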